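/- For any orthogonal projection P on a complex Hilbert space H and any vectors x, y ∈ H, |⟨Px, y⟩| ≤ (1/2)(|⟨x,y⟩| + ‖x‖‖y‖). -/
import Mathlib


open scoped InnerProductSpace

theorem projection_buzano {H : Type*} [NormedAddCommGroup H]
    [InnerProductSpace ℂ H] [CompleteSpace H] (P : H →L[ℂ] H)
    (hP : P * P = P) (hP' : ContinuousLinearMap.adjoint P = P) (x y : H) :
    ‖⟪P x, y⟫_ℂ‖ ≤ (1 / 2) * (‖⟪x, y⟫_ℂ‖ + ‖x‖ * ‖y‖) := by
  set Q : H →L[ℂ] H := 2 • P - 1 with hQ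
  have hQ2 : ∀ z : H, Q (Q z) = z := by
    intro z
    have := congrArg (fun A : H →L[ℂ] H => A z) hP
    simp only [ContinuousLinearMap.mul_apply] at this
    simp [hQ, ContinuousLinearMap.sub_apply, ContinuousLinearMap.smul_apply, map_sub,
      map_smul, this, smul_smul, two_smul]
  have hQadj : ContinuousLinearMap.adjoint Q = Q := by
    have hPs : star P = P := by rw [ContinuousLinearMap.star_eq_adjoint, hP']
    rw [← ContinuousLinearMap.star_eq_adjoint, hQ]
    simp [star_sub, hPs, two_mul, mul_two]
  have hQnorm : ∀ z : H, ‖Q z‖ = ‖z‖ := by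
    intro z
    have h1 : (⟪Q z, Q z⟫_ℂ) = ⟪z, z⟫_ℂ := by
      rw [← ContinuousLinearMap.adjoint_inner_right Q, hQadj, hQ2]
    rw [norm_eq_sqrt_re_inner (𝕜 := ℂ) (Q z), norm_eq_sqrt_re_inner (𝕜 := ℂ) z, h1]
  have key : ⟪P x, y⟫_ℂ = (1 / 2 : ℂ) * (⟪x, y⟫_ℂ + ⟪Q x, y⟫_ℂ) := by
    have : Q x = 2 • P x - x := by simp [hQ]
    rw [this]
    rw [sub_eq_add_neg, inner_add_left, inner_neg_left]
    simp [two_smul, inner_add_left]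
    ring
  rw [key]
  have h2 : ‖⟪Q x, y⟫_ℂ‖ ≤ ‖x‖ * ‖y‖ := by
    calc ‖⟪Q x, y⟫_ℂ‖ ≤ ‖Q x‖ * ‖y‖ := norm_inner_le_norm _ _
    _ = ‖x‖ * ‖y‖ := by rw [hQnorm]
  calc ‖(1 / 2 : ℂ) * (⟪x, y⟫_ℂ + ⟪Q x, y⟫_ℂ)‖
      = (1 / 2) * ‖⟪x, y⟫_ℂ + ⟪Q x, y⟫_ℂ‖ := by
        rw [norm_mul]; norm_num
    _ ≤ (1 / 2) * (‖⟪x, y⟫_ℂ‖ + ‖⟪Q x, y⟫_ℂ‖) := by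
        gcongr; exact norm_add_le _ _
    _ ≤ (1 / 2) * (‖⟪x, y⟫_ℂ‖ + ‖x‖ * ‖y‖) := by gcongr
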